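/- Let l ≥ 1 and c ≥ 0 be integers. Then det[ (j + k + c - 2)! ]_{j,k=1}^{l} = (∏_{k=0}^{l-1} (k + c)!) · (∏_{k=1}^{l-1} k!). -/

import Mathlib

open Finset

theorem stmt_7 (l c : ℕ) (hl : 1 ≤ l) :
    Matrix.det (Matrix.of fun j k : Fin l =>
        (Nat.factorial ((j : ℕ) + (k : ℕ) + c) : ℤ)) =
      (∏ k ∈ Finset.range l, (Nat.factorial (k + c) : ℤ)) *
        ∏ k ∈ Finset.Icc 1 (l - 1), (Nat.factorial k : ℤ) := by
  obtain ⟨n, rfl⟩ := Nat.exists_eq_succ_of_ne_zero (by omega : l ≠ 0)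
  have key : ∀ j k : Fin (n + 1),
      ((Nat.factorial ((j : ℕ) + (k : ℕ) + c)) : ℤ) =
        ((Nat.factorial ((j : ℕ) + c)) : ℤ) *
          (ascPochhammer ℤ (k : ℕ)).eval ((j : ℕ) + c + 1 : ℤ) := by
    intro j k
    have h1 : ((j : ℕ) + c + 1 : ℤ) = (((j : ℕ) + c + 1 : ℕ) : ℤ) := by push_cast; ring
    rw [h1, ← ascPochhammer_eval_cast, ascPochhammer_nat_eq_ascFactorial]
    rw [← Nat.cast_mul, Nat.factorial_mul_ascFactorial]
    congr 2
    omega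
  have hmat : (Matrix.of fun j k : Fin (n + 1) =>
      (Nat.factorial ((j : ℕ) + (k : ℕ) + c) : ℤ)) =
      Matrix.of fun j k : Fin (n + 1) =>
        ((Nat.factorial ((j : ℕ) + c)) : ℤ) *
          (ascPochhammer ℤ (k : ℕ)).eval (((j : ℕ) : ℤ) + ((c : ℤ) + 1)) := by
    ext j k
    rw [Matrix.of_apply, Matrix.of_apply, key j k]
    ring_nf
  rw [hmat, Matrix.det_mul_column
      (fun j : Fin (n + 1) => ((Nat.factorial ((j : ℕ) + c)) : ℤ))
      (fun j k : Fin (n + 1) =>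
        Polynomial.eval (((j : ℕ) : ℤ) + ((c : ℤ) + 1)) (ascPochhammer ℤ (k : ℕ)))]
  have hvand := Matrix.det_eval_matrixOfPolynomials_eq_det_vandermonde
      (fun j : Fin (n + 1) => ((j : ℕ) : ℤ) + ((c : ℤ) + 1))
      (fun k : Fin (n + 1) => ascPochhammer ℤ (k : ℕ))
      (fun k => ascPochhammer_natDegree (S := ℤ) (k : ℕ))
      (fun k => monic_ascPochhammer _ _)
  have h2 : (Matrix.det fun j k : Fin (n + 1) =>
      Polynomial.eval (((j : ℕ) : ℤ) + ((c : ℤ) + 1)) (ascPochhammer ℤ (k : ℕ))) =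
      (Matrix.vandermonde fun j : Fin (n + 1) => ((j : ℕ) : ℤ)).det := by
    rw [← Matrix.det_vandermonde_add (fun j : Fin (n + 1) => ((j : ℕ) : ℤ)) ((c : ℤ) + 1)]
    exact hvand.symm
  rw [h2, Matrix.det_vandermonde_id_eq_superFactorial]
  congr 1
  · exact Fin.prod_univ_eq_prod_range (fun m => ((Nat.factorial (m + c)) : ℤ)) (n + 1)
  · rw [Nat.succ_sub_one, ← Nat.prod_Icc_factorial]
    push_cast
    rfl
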